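/- Let K = {0,1,...,r-1} with r = q^ℓ + 1 for a prime power q, let w ⊂ F_q^{n+ℓ} be a fixed ℓ-dimensional subspace, φ: K∖{0} → w a bijection, and f_1,...,f_n linearly independent vectors in F_q^{n+ℓ} whose span intersects w trivially. Define, for each word x̂ of weight m in K^n, φ̃(x̂) = span{ f_i + φ(x̂_i) : x̂_i ≠ 0 }. Then the map φ̃ is injective from words of weight m in K^n into m-dimensional subspaces of F_q^{n+ℓ} intersecting w trivially. -/

import Mathlib

noncomputable section

/-- The embedding `φ̃` of weight-`m` words over the alphabet `K = Fin (q^ℓ+1)` into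
`m`-dimensional subspaces of `F_q^{n+ℓ}` intersecting `w` trivially is injective. -/
theorem stmt3 (pr e n ℓ m q : ℕ) (hpr : pr.Prime) (he : 0 < e) (hq : q = pr ^ e)
    (F : Type) [Field F] [Fintype F] (hF : Fintype.card F = q)
    (w : Submodule F (Fin (n + ℓ) → F)) (hw : Module.finrank F w = ℓ)
    (φ : {k : Fin (q ^ ℓ + 1) // k ≠ 0} → w) (hφ : Function.Bijective φ)
    (f : Fin n → (Fin (n + ℓ) → F)) (hf : LinearIndependent F f)
    (hfw : Submodule.span F (Set.range f) ⊓ w = ⊥) :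
    Set.InjOn
      (fun x : Fin n → Fin (q ^ ℓ + 1) =>
        Submodule.span F
          {v : Fin (n + ℓ) → F |
            ∃ i : Fin n, ∃ h : x i ≠ 0, v = f i + (φ ⟨x i, h⟩ : Fin (n + ℓ) → F)})
      {x : Fin n → Fin (q ^ ℓ + 1) |
        (Finset.univ.filter (fun i => x i ≠ 0)).card = m} := by
  have key : ∀ a b : Fin n → Fin (q ^ ℓ + 1),
      Submodule.span F
          {v : Fin (n + ℓ) → F |
            ∃ i : Fin n, ∃ h : a i ≠ 0, v = f i + (φ ⟨a i, h⟩ : Fin (n + ℓ) → F)} ≤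
      Submodule.span F
          {v : Fin (n + ℓ) → F |
            ∃ i : Fin n, ∃ h : b i ≠ 0, v = f i + (φ ⟨b i, h⟩ : Fin (n + ℓ) → F)} →
      ∀ i : Fin n, a i ≠ 0 → b i = a i := by
    intro a b hle i hi
    set g : {j : Fin n // b j ≠ 0} → (Fin (n + ℓ) → F) :=
      fun j => f j + (φ ⟨b j, j.2⟩ : Fin (n + ℓ) → F) with hg
    have hset : {v : Fin (n + ℓ) → F |
        ∃ i : Fin n, ∃ h : b i ≠ 0, v = f i + (φ ⟨b i, h⟩ : Fin (n + ℓ) → F)}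
        = Set.range g := by
      ext v
      constructor
      · rintro ⟨j, hj, rfl⟩; exact ⟨⟨j, hj⟩, rfl⟩
      · rintro ⟨j, rfl⟩; exact ⟨j.1, j.2, rfl⟩
    have hmem : f i + (φ ⟨a i, hi⟩ : Fin (n + ℓ) → F) ∈
        Submodule.span F (Set.range g) := by
      rw [← hset]
      exact hle (Submodule.subset_span ⟨i, hi, rfl⟩)
    rw [Finsupp.mem_span_range_iff_exists_finsupp] at hmem
    obtain ⟨c, hc⟩ := hmem
    have hsplit : (c.sum fun j r => r • g j) =
        (c.sum fun j r => r • f j.1) +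
          (c.sum fun j r => r • (φ ⟨b j, j.2⟩ : Fin (n + ℓ) → F)) := by
      rw [← Finsupp.sum_add]
      congr 1
      ext j r
      simp only [hg, smul_add, Pi.add_apply, Pi.smul_apply, smul_eq_mul]
      ring
    rw [hsplit] at hc
    set A : Fin (n + ℓ) → F := c.sum fun j r => r • f j.1 with hA
    set B : w := c.sum fun j r => r • φ ⟨b j, j.2⟩ with hB
    have hBcoe : (B : Fin (n + ℓ) → F)
        = c.sum fun j r => r • (φ ⟨b j, j.2⟩ : Fin (n + ℓ) → F) := by
      rw [hB]
      simp [Finsupp.sum, AddSubmonoidClass.coe_finset_sum]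
    rw [← hBcoe] at hc
    have hzero : f i - A = 0 := by
      have h1 : f i - A ∈ Submodule.span F (Set.range f) := by
        apply Submodule.sub_mem
        · exact Submodule.subset_span ⟨i, rfl⟩
        · apply Submodule.sum_mem
          intro j _
          exact Submodule.smul_mem _ _ (Submodule.subset_span ⟨j.1, rfl⟩)
      have h2 : f i - A ∈ w := by
        have heq : f i - A = (B : Fin (n + ℓ) → F) - (φ ⟨a i, hi⟩ : Fin (n + ℓ) → F) := by
          rw [sub_eq_sub_iff_add_eq_add, ← hc]
          abel
        rw [heq]
        exact Submodule.sub_mem _ B.2 (φ ⟨a i, hi⟩).2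
      have h3 := hfw ▸ (Submodule.mem_inf.mpr ⟨h1, h2⟩)
      simpa using h3
    have hfiA : f i = A := by
      have := sub_eq_zero.mp hzero; exact this
    -- use linear independence to identify coefficients
    set d : Fin n →₀ F := c.embDomain (Function.Embedding.subtype _) with hd
    have hdA : (d.sum fun j r => r • f j) = A := by
      rw [hd, Finsupp.sum_embDomain]
      rfl
    have hdsingle : d = Finsupp.single i (1 : F) := by
      apply hf
      rw [Finsupp.linearCombination_apply, Finsupp.linearCombination_single, one_smul, hdA]
      exact hfiA.symm
    have hbi : b i ≠ 0 := by
      intro h0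
      have hnr : i ∉ Set.range (Function.Embedding.subtype (fun j : Fin n => b j ≠ 0)) := by
        rintro ⟨j, hj⟩
        exact j.2 (by rw [show (j : Fin n) = i from hj, h0])
      have : d i = 0 := Finsupp.embDomain_notin_range _ _ _ hnr
      rw [hdsingle, Finsupp.single_eq_same] at this
      exact one_ne_zero this
    have hcsingle : c = Finsupp.single ⟨i, hbi⟩ (1 : F) := by
      ext j
      have hcj : c j = d j.1 := by
        rw [hd]
        exact (Finsupp.embDomain_apply_self (Function.Embedding.subtype _) c j).symm
      by_cases hji : j = ⟨i, hbi⟩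
      · subst hji
        simp only [Finsupp.single_eq_same]
        rw [hcj, hdsingle]
        exact Finsupp.single_eq_same
      · have hji' : (j : Fin n) ≠ i := fun h => hji (Subtype.ext h)
        rw [hcj, hdsingle, Finsupp.single_eq_of_ne' (Ne.symm hji'),
          Finsupp.single_eq_of_ne' (Ne.symm hji)]
    have hBval : B = φ ⟨b i, hbi⟩ := by
      rw [hB, hcsingle]
      simp
    have hphiEq : φ ⟨a i, hi⟩ = φ ⟨b i, hbi⟩ := by
      apply Subtype.coe_injective
      have hc' := hc
      rw [← hfiA] at hc'
      have h5 : (B : Fin (n + ℓ) → F) = (φ ⟨a i, hi⟩ : Fin (n + ℓ) → F) :=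
        add_left_cancel hc'
      show (φ ⟨a i, hi⟩ : Fin (n + ℓ) → F) = (φ ⟨b i, hbi⟩ : Fin (n + ℓ) → F)
      rw [← h5, hBval]
    have := hφ.injective hphiEq
    exact congrArg Subtype.val this.symm
  intro x hx y hy hxy
  simp only at hxy
  have h1 := key x y (le_of_eq hxy)
  have h2 := key y x (le_of_eq hxy.symm)
  funext i
  by_cases hxi : x i = 0
  · by_cases hyi : y i = 0
    · rw [hxi, hyi]
    · exact absurd ((h2 i hyi).symm.trans hxi) hyi
  · exact (h1 i hxi).symm
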